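/- Let k ≥ 1 and T ≥ 1 be integers, M a finite set, and v: 2^M → ℝ additive. Then there exist four additive valuation functions v¹, v², v³, v⁴: 2^M → ℝ with vʲ(x) ∈ [0,1] for all j ∈ {1,2,3,4} and x ∈ M, such that: whenever A, B ⊆ M are disjoint sets satisfying |(1/k)vʲ(M) − vʲ(X)| ≤ T for all j ∈ {1,2,3,4} and X ∈ {A,B}, there exists P ⊆ A ∪ B with |P| ≤ 14T and v(A \ P) ≥ v(B \ P), and there exists P' ⊆ A ∪ B with |P'| ≤ 14T and v(B \ P') ≥ v(A \ P'). -/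

import Mathlib

open Finset

private lemma exists_top_subset {α : Type*} [DecidableEq α] (f : α → ℝ) :
    ∀ (n : ℕ) (s : Finset α), ∃ t, t ⊆ s ∧ t.card = min n s.card ∧
      ∀ x ∈ t, ∀ y ∈ s, y ∉ t → f y ≤ f x := by
  intro n
  induction n with
  | zero => exact fun s => ⟨∅, empty_subset _, by simp, by simp⟩
  | succ n ih =>
    intro s
    rcases s.eq_empty_or_nonempty with rfl | hs
    · exact ⟨∅, empty_subset _, by simp, by simp⟩
    · obtain ⟨m, hm, hmax⟩ := s.exists_max_image f hs
      obtain ⟨t, hts, hcard, hprop⟩ := ih (s.erase m)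
      have hmt : m ∉ t := fun h => (Finset.mem_erase.mp (hts h)).1 rfl
      refine ⟨insert m t, ?_, ?_, ?_⟩
      · intro x hx
        rcases Finset.mem_insert.mp hx with rfl | hx
        · exact hm
        · exact Finset.erase_subset _ _ (hts hx)
      · rw [Finset.card_insert_of_notMem hmt, hcard, Finset.card_erase_of_mem hm]
        have : 1 ≤ s.card := Finset.card_pos.mpr hs
        omega
      · intro x hx y hy hyt
        have hym : y ≠ m := fun h => hyt (h ▸ Finset.mem_insert_self m t)
        rcases Finset.mem_insert.mp hx with rfl | hx
        · exact hmax y hy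
        · exact hprop x hx y (Finset.mem_erase.mpr ⟨hym, hy⟩)
            (fun h => hyt (Finset.mem_insert_of_mem h))

/-- The disc-to-EF-k lemma: for any additive valuation `v` (with possibly
positive and negative item values) there exist four `[0,1]`-valued additive
valuations such that whenever disjoint sets `A, B` are `T`-balanced with
respect to all four auxiliary valuations, the envy between `A` and `B` (in
either direction, with respect to `v`) can be eliminated by discarding at
most `14T` items. -/
theorem disc_to_efk {α : Type*} [DecidableEq α]
    (M : Finset α) (v : α → ℝ) (k T : ℕ) (hk : 1 ≤ k) (hT : 1 ≤ T) :
    ∃ w : Fin 4 → α → ℝ,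
      (∀ (j : Fin 4), ∀ x ∈ M, 0 ≤ w j x ∧ w j x ≤ 1) ∧
      ∀ A B : Finset α, A ⊆ M → B ⊆ M → Disjoint A B →
        (∀ (j : Fin 4), ∀ X ∈ ({A, B} : Set (Finset α)),
          |(1 / (k : ℝ)) * (∑ x ∈ M, w j x) - ∑ x ∈ X, w j x| ≤ (T : ℝ)) →
        (∃ P : Finset α, P ⊆ A ∪ B ∧ P.card ≤ 14 * T ∧
          (∑ x ∈ A \ P, v x) ≥ ∑ x ∈ B \ P, v x) ∧
        (∃ P' : Finset α, P' ⊆ A ∪ B ∧ P'.card ≤ 14 * T ∧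
          (∑ x ∈ B \ P', v x) ≥ ∑ x ∈ A \ P', v x) := by
  classical
  have hk0 : (0:ℝ) < (k:ℝ) := by exact_mod_cast Nat.lt_of_lt_of_le Nat.zero_lt_one hk
  set Pos := M.filter (fun x => 0 < v x) with hPosdef
  set Neg := M.filter (fun x => v x < 0) with hNegdef
  obtain ⟨Hp, hHpPos, hHpcard, hHpmax⟩ := exists_top_subset v (3*T*k) Pos
  obtain ⟨Hn, hHnNeg, hHncard, hHnmax⟩ := exists_top_subset (fun x => -v x) (3*T*k) Neg
  set Sp := Pos \ Hp with hSpdef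
  set Sn := Neg \ Hn with hSndef
  have hHpM : Hp ⊆ M := hHpPos.trans (filter_subset _ _)
  have hHnM : Hn ⊆ M := hHnNeg.trans (filter_subset _ _)
  have hvHp : ∀ x ∈ Hp, 0 < v x := fun x hx => (mem_filter.mp (hHpPos hx)).2
  have hvSp : ∀ x ∈ Sp, 0 < v x := fun x hx => (mem_filter.mp (mem_sdiff.mp hx).1).2
  have hvHn : ∀ x ∈ Hn, v x < 0 := fun x hx => (mem_filter.mp (hHnNeg hx)).2
  have hvSn : ∀ x ∈ Sn, v x < 0 := fun x hx => (mem_filter.mp (mem_sdiff.mp hx).1).2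
  set mp : ℝ := if h : Sp.Nonempty then Sp.sup' h v else 1 with hmpdef
  set mq : ℝ := if h : Sn.Nonempty then Sn.sup' h (fun x => -v x) else 1 with hmqdef
  have hmp_pos : 0 < mp := by
    rw [hmpdef]; split
    · rename_i h; obtain ⟨y, hy⟩ := h
      exact lt_of_lt_of_le (hvSp y hy) (Finset.le_sup' v hy)
    · norm_num
  have hmq_pos : 0 < mq := by
    rw [hmqdef]; split
    · rename_i h; obtain ⟨y, hy⟩ := h
      exact lt_of_lt_of_le (by linarith [hvSn y hy]) (Finset.le_sup' (fun x => -v x) hy)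
    · norm_num
  have hmp_ge : ∀ x ∈ Sp, v x ≤ mp := by
    intro x hx; rw [hmpdef, dif_pos ⟨x, hx⟩]; exact Finset.le_sup' v hx
  have hmq_ge : ∀ x ∈ Sn, -v x ≤ mq := by
    intro x hx; rw [hmqdef, dif_pos ⟨x, hx⟩]; exact Finset.le_sup' (fun x => -v x) hx
  have hmp_le : Sp.Nonempty → ∀ x ∈ Hp, mp ≤ v x := by
    intro h x hx
    obtain ⟨y, hy, hye⟩ := Finset.exists_mem_eq_sup' h v
    rw [hmpdef, dif_pos h, hye]
    exact hHpmax x hx y (mem_sdiff.mp hy).1 (mem_sdiff.mp hy).2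
  have hmq_le : Sn.Nonempty → ∀ x ∈ Hn, mq ≤ -v x := by
    intro h x hx
    obtain ⟨y, hy, hye⟩ := Finset.exists_mem_eq_sup' h (fun x => -v x)
    rw [hmqdef, dif_pos h, hye]
    exact hHnmax x hx y (mem_sdiff.mp hy).1 (mem_sdiff.mp hy).2
  -- decomposition of sums
  have decomp : ∀ X : Finset α, X ⊆ M →
      ∑ x ∈ X, v x = ((∑ x ∈ X ∩ Hp, v x) + (∑ x ∈ X ∩ Sp, v x))
        + ((∑ x ∈ X ∩ Hn, v x) + (∑ x ∈ X ∩ Sn, v x)) := by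
    intro X hX
    have d1 : Disjoint (X ∩ Hp) (X ∩ Sp) := by
      rw [Finset.disjoint_left]; intro a ha ha'
      exact (mem_sdiff.mp (mem_inter.mp ha').2).2 (mem_inter.mp ha).2
    have d2 : Disjoint (X ∩ Hn) (X ∩ Sn) := by
      rw [Finset.disjoint_left]; intro a ha ha'
      exact (mem_sdiff.mp (mem_inter.mp ha').2).2 (mem_inter.mp ha).2
    have d3 : Disjoint ((X ∩ Hp) ∪ (X ∩ Sp)) ((X ∩ Hn) ∪ (X ∩ Sn)) := by
      rw [Finset.disjoint_left]; intro a ha ha'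
      have haP : 0 < v a := by
        rcases mem_union.mp ha with h|h
        · exact hvHp a (mem_inter.mp h).2
        · exact hvSp a (mem_inter.mp h).2
      have haN : v a < 0 := by
        rcases mem_union.mp ha' with h|h
        · exact hvHn a (mem_inter.mp h).2
        · exact hvSn a (mem_inter.mp h).2
      linarith
    rw [← Finset.sum_union d1, ← Finset.sum_union d2, ← Finset.sum_union d3]
    refine (Finset.sum_subset ?_ ?_).symm
    · intro a ha
      rcases mem_union.mp ha with h|h <;> rcases mem_union.mp h with h'|h' <;>
        exact (mem_inter.mp h').1
    · intro a ha hC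
      rcases lt_trichotomy (v a) 0 with h|h|h
      · have haN : a ∈ Neg := mem_filter.mpr ⟨hX ha, h⟩
        exfalso
        by_cases hHn : a ∈ Hn
        · exact hC (mem_union_right _ (mem_union_left _ (mem_inter.mpr ⟨ha, hHn⟩)))
        · exact hC (mem_union_right _ (mem_union_right _
            (mem_inter.mpr ⟨ha, mem_sdiff.mpr ⟨haN, hHn⟩⟩)))
      · exact h
      · have haP : a ∈ Pos := mem_filter.mpr ⟨hX ha, h⟩
        exfalso
        by_cases hHp : a ∈ Hp
        · exact hC (mem_union_left _ (mem_union_left _ (mem_inter.mpr ⟨ha, hHp⟩)))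
        · exact hC (mem_union_left _ (mem_union_right _
            (mem_inter.mpr ⟨ha, mem_sdiff.mpr ⟨haP, hHp⟩⟩)))
  -- the key one-directional lemma
  have key : ∀ A B : Finset α, A ⊆ M → B ⊆ M → Disjoint A B →
      (((B ∩ Hp).card : ℝ) ≤ 4*T) →
      (((A ∩ Hn).card : ℝ) ≤ 4*T) →
      (Sp.Nonempty → 2*(T:ℝ) ≤ ((A ∩ Hp).card : ℝ)) →
      (Sn.Nonempty → 2*(T:ℝ) ≤ ((B ∩ Hn).card : ℝ)) →
      (Sp.Nonempty → (∑ x ∈ B ∩ Sp, v x) - (∑ x ∈ A ∩ Sp, v x) ≤ 2*T*mp) →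
      (Sn.Nonempty → (∑ x ∈ B ∩ Sn, v x) - (∑ x ∈ A ∩ Sn, v x) ≤ 2*T*mq) →
      ∃ P : Finset α, P ⊆ A ∪ B ∧ P.card ≤ 14*T ∧
        (∑ x ∈ A \ P, v x) ≥ ∑ x ∈ B \ P, v x := by
    intro A B hA hB hd hc1 hc2 hc3 hc4 hs5 hs6
    refine ⟨(B ∩ Hp) ∪ (A ∩ Hn), ?_, ?_, ?_⟩
    · intro x hx
      rcases mem_union.mp hx with h|h
      · exact mem_union_right _ (mem_inter.mp h).1
      · exact mem_union_left _ (mem_inter.mp h).1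
    · have e1 : (B ∩ Hp).card ≤ 4*T := by
        have h : ((B ∩ Hp).card : ℝ) ≤ ((4*T : ℕ) : ℝ) := by push_cast; linarith
        exact_mod_cast h
      have e2 : (A ∩ Hn).card ≤ 4*T := by
        have h : ((A ∩ Hn).card : ℝ) ≤ ((4*T : ℕ) : ℝ) := by push_cast; linarith
        exact_mod_cast h
      calc ((B ∩ Hp) ∪ (A ∩ Hn)).card ≤ (B ∩ Hp).card + (A ∩ Hn).card :=
            card_union_le _ _
      _ ≤ 14*T := by omega
    · have hd' := Finset.disjoint_left.mp hd
      have hd'' := Finset.disjoint_right.mp hd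
      have eA : A \ ((B ∩ Hp) ∪ (A ∩ Hn)) = A \ Hn := by
        ext x
        simp only [mem_sdiff, mem_union, mem_inter, not_or, not_and]
        constructor
        · rintro ⟨h1, _, h3⟩; exact ⟨h1, h3 h1⟩
        · rintro ⟨h1, h2⟩; exact ⟨h1, fun hB => absurd hB (hd' h1), fun _ => h2⟩
      have eB : B \ ((B ∩ Hp) ∪ (A ∩ Hn)) = B \ Hp := by
        ext x
        simp only [mem_sdiff, mem_union, mem_inter, not_or, not_and]
        constructor
        · rintro ⟨h1, h2, _⟩; exact ⟨h1, h2 h1⟩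
        · rintro ⟨h1, h2⟩; exact ⟨h1, fun _ => h2, fun hA => absurd hA (hd'' h1)⟩
      rw [eA, eB]
      have sA : ∑ x ∈ A \ Hn, v x
          = (∑ x ∈ A ∩ Hp, v x) + (∑ x ∈ A ∩ Sp, v x) + (∑ x ∈ A ∩ Sn, v x) := by
        rw [← Finset.sdiff_inter_self_left,
          Finset.sum_sdiff_eq_sub inter_subset_left, decomp A hA]
        ring
      have sB : ∑ x ∈ B \ Hp, v x
          = (∑ x ∈ B ∩ Sp, v x) + (∑ x ∈ B ∩ Hn, v x) + (∑ x ∈ B ∩ Sn, v x) := by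
        rw [← Finset.sdiff_inter_self_left,
          Finset.sum_sdiff_eq_sub inter_subset_left, decomp B hB]
        ring
      rw [sA, sB]
      have c1 : 0 ≤ ∑ x ∈ A ∩ Hp, v x :=
        Finset.sum_nonneg fun x hx => (hvHp x (mem_inter.mp hx).2).le
      have c2 : ∑ x ∈ B ∩ Hn, v x ≤ 0 :=
        Finset.sum_nonpos fun x hx => (hvHn x (mem_inter.mp hx).2).le
      have hb1 : (∑ x ∈ B ∩ Sp, v x) ≤ (∑ x ∈ A ∩ Hp, v x) + (∑ x ∈ A ∩ Sp, v x) := by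
        by_cases hne : Sp.Nonempty
        · have g1 : 2*(T:ℝ)*mp ≤ ∑ x ∈ A ∩ Hp, v x := by
            calc 2*(T:ℝ)*mp ≤ ((A ∩ Hp).card : ℝ) * mp :=
                  mul_le_mul_of_nonneg_right (hc3 hne) hmp_pos.le
            _ ≤ ∑ x ∈ A ∩ Hp, v x := by
                  have := Finset.card_nsmul_le_sum (A ∩ Hp) v mp
                    (fun x hx => hmp_le hne x (mem_inter.mp hx).2)
                  simpa [nsmul_eq_mul] using this
          linarith [hs5 hne]
        · have e0 : Sp = ∅ := not_nonempty_iff_eq_empty.mp hne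
          have e1 : A ∩ Sp = ∅ := by rw [e0, inter_empty]
          have e2 : B ∩ Sp = ∅ := by rw [e0, inter_empty]
          rw [e1, e2]; simpa using c1
      have hb2 : (∑ x ∈ B ∩ Hn, v x) + (∑ x ∈ B ∩ Sn, v x) ≤ ∑ x ∈ A ∩ Sn, v x := by
        by_cases hne : Sn.Nonempty
        · have g1 : ∑ x ∈ B ∩ Hn, v x ≤ -(2*(T:ℝ)*mq) := by
            have h1 : ∑ x ∈ B ∩ Hn, v x ≤ ((B ∩ Hn).card : ℝ) * (-mq) := by
              have := Finset.sum_le_card_nsmul (B ∩ Hn) v (-mq)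
                (fun x hx => by linarith [hmq_le hne x (mem_inter.mp hx).2])
              simpa [nsmul_eq_mul] using this
            have h2 : 2*(T:ℝ)*mq ≤ ((B ∩ Hn).card : ℝ) * mq :=
              mul_le_mul_of_nonneg_right (hc4 hne) hmq_pos.le
            have h3 : ((B ∩ Hn).card : ℝ) * (-mq) = -(((B ∩ Hn).card : ℝ) * mq) := by ring
            linarith
          linarith [hs6 hne]
        · have e0 : Sn = ∅ := not_nonempty_iff_eq_empty.mp hne
          have e1 : A ∩ Sn = ∅ := by rw [e0, inter_empty]
          have e2 : B ∩ Sn = ∅ := by rw [e0, inter_empty]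
          rw [e1, e2]; simpa using c2
      linarith
  -- provide the four auxiliary valuations
  refine ⟨![fun x => if x ∈ Hp then (1:ℝ) else 0,
            fun x => if x ∈ Hn then (1:ℝ) else 0,
            fun x => if x ∈ Sp then v x / mp else 0,
            fun x => if x ∈ Sn then (-(v x)) / mq else 0], ?_, ?_⟩
  · intro j x hx
    fin_cases j
    · show 0 ≤ (if x ∈ Hp then (1:ℝ) else 0) ∧ (if x ∈ Hp then (1:ℝ) else 0) ≤ 1
      split_ifs <;> norm_num
    · show 0 ≤ (if x ∈ Hn then (1:ℝ) else 0) ∧ (if x ∈ Hn then (1:ℝ) else 0) ≤ 1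
      split_ifs <;> norm_num
    · show 0 ≤ (if x ∈ Sp then v x / mp else 0) ∧ (if x ∈ Sp then v x / mp else 0) ≤ 1
      split_ifs with h
      · exact ⟨div_nonneg (hvSp x h).le hmp_pos.le, (div_le_one hmp_pos).mpr (hmp_ge x h)⟩
      · norm_num
    · show 0 ≤ (if x ∈ Sn then (-(v x)) / mq else 0) ∧
        (if x ∈ Sn then (-(v x)) / mq else 0) ≤ 1
      split_ifs with h
      · exact ⟨div_nonneg (by linarith [hvSn x h]) hmq_pos.le,
          (div_le_one hmq_pos).mpr (hmq_ge x h)⟩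
      · norm_num
  intro A B hA hB hd hbal
  have memA : A ∈ ({A, B} : Set (Finset α)) := Set.mem_insert _ _
  have memB : B ∈ ({A, B} : Set (Finset α)) := Set.mem_insert_of_mem _ rfl
  have hsumHp : ∀ X : Finset α, ∑ x ∈ X, (if x ∈ Hp then (1:ℝ) else 0) = ((X ∩ Hp).card : ℝ) := by
    intro X; rw [Finset.sum_ite_mem]; simp
  have hsumHn : ∀ X : Finset α, ∑ x ∈ X, (if x ∈ Hn then (1:ℝ) else 0) = ((X ∩ Hn).card : ℝ) := by
    intro X; rw [Finset.sum_ite_mem]; simp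
  have hsumSp : ∀ X : Finset α,
      ∑ x ∈ X, (if x ∈ Sp then v x / mp else 0) = (∑ x ∈ X ∩ Sp, v x) / mp := by
    intro X; rw [Finset.sum_ite_mem, Finset.sum_div]
  have hsumSn : ∀ X : Finset α,
      ∑ x ∈ X, (if x ∈ Sn then (-(v x)) / mq else 0) = (-(∑ x ∈ X ∩ Sn, v x)) / mq := by
    intro X; rw [Finset.sum_ite_mem, ← Finset.sum_neg_distrib, Finset.sum_div]
  have hb0 : ∀ X ∈ ({A, B} : Set (Finset α)),
      |(1/(k:ℝ)) * ((Hp.card : ℝ)) - ((X ∩ Hp).card : ℝ)| ≤ (T:ℝ) := by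
    intro X hX
    have h := hbal 0 X hX
    simp only [Matrix.cons_val_zero] at h
    rwa [hsumHp M, hsumHp X, inter_eq_right.mpr hHpM] at h
  have hb1 : ∀ X ∈ ({A, B} : Set (Finset α)),
      |(1/(k:ℝ)) * ((Hn.card : ℝ)) - ((X ∩ Hn).card : ℝ)| ≤ (T:ℝ) := by
    intro X hX
    have h := hbal 1 X hX
    simp only [Matrix.cons_val_one, Matrix.head_cons, Matrix.cons_val_zero] at h
    rwa [hsumHn M, hsumHn X, inter_eq_right.mpr hHnM] at h
  have hb2 : ∀ X ∈ ({A, B} : Set (Finset α)),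
      |(1/(k:ℝ)) * ((∑ x ∈ M ∩ Sp, v x) / mp) - (∑ x ∈ X ∩ Sp, v x) / mp| ≤ (T:ℝ) := by
    intro X hX
    have h := hbal 2 X hX
    simp only [Matrix.cons_val_two, Matrix.tail_cons, Matrix.head_cons] at h
    rwa [hsumSp M, hsumSp X] at h
  have hb3 : ∀ X ∈ ({A, B} : Set (Finset α)),
      |(1/(k:ℝ)) * ((-(∑ x ∈ M ∩ Sn, v x)) / mq) - (-(∑ x ∈ X ∩ Sn, v x)) / mq| ≤ (T:ℝ) := by
    intro X hX
    have h := hbal 3 X hX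
    simp only [Matrix.cons_val_three, Matrix.tail_cons, Matrix.head_cons] at h
    rwa [hsumSn M, hsumSn X] at h
  -- card upper bounds
  have cHp_le : (Hp.card : ℝ) ≤ 3*(T:ℝ)*(k:ℝ) := by
    have h : Hp.card ≤ 3*T*k := hHpcard.trans_le (min_le_left _ _)
    calc (Hp.card : ℝ) ≤ ((3*T*k : ℕ) : ℝ) := by exact_mod_cast h
    _ = 3*(T:ℝ)*(k:ℝ) := by push_cast; ring
  have cHn_le : (Hn.card : ℝ) ≤ 3*(T:ℝ)*(k:ℝ) := by
    have h : Hn.card ≤ 3*T*k := hHncard.trans_le (min_le_left _ _)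
    calc (Hn.card : ℝ) ≤ ((3*T*k : ℕ) : ℝ) := by exact_mod_cast h
    _ = 3*(T:ℝ)*(k:ℝ) := by push_cast; ring
  have bound_up : ∀ (c x : ℝ), c ≤ 3*(T:ℝ)*(k:ℝ) → |(1/(k:ℝ))*c - x| ≤ (T:ℝ) → x ≤ 4*T := by
    intro c x hc h
    rw [abs_le] at h
    have h1 : (1/(k:ℝ))*c ≤ 3*T := by
      rw [one_div, inv_mul_eq_div, div_le_iff₀ hk0]
      linarith
    linarith [h.1]
  have hupAHp : ((A ∩ Hp).card : ℝ) ≤ 4*T := bound_up _ _ cHp_le (hb0 A memA)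
  have hupBHp : ((B ∩ Hp).card : ℝ) ≤ 4*T := bound_up _ _ cHp_le (hb0 B memB)
  have hupAHn : ((A ∩ Hn).card : ℝ) ≤ 4*T := bound_up _ _ cHn_le (hb1 A memA)
  have hupBHn : ((B ∩ Hn).card : ℝ) ≤ 4*T := bound_up _ _ cHn_le (hb1 B memB)
  -- card lower bounds in the "many items" case
  have hHpfull : Sp.Nonempty → (1/(k:ℝ)) * (Hp.card : ℝ) = 3*T := by
    intro h
    have hfull : Hp.card = 3*T*k := by
      rcases le_or_gt (3*T*k) Pos.card with hle|hlt
      · exact hHpcard.trans (min_eq_left hle)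
      · exfalso
        have heq : Hp = Pos := Finset.eq_of_subset_of_card_le hHpPos (by rw [hHpcard]; omega)
        obtain ⟨y, hy⟩ := h
        exact (mem_sdiff.mp hy).2 (heq ▸ (mem_sdiff.mp hy).1)
    rw [hfull, one_div, inv_mul_eq_div, div_eq_iff hk0.ne']
    push_cast; ring
  have hHnfull : Sn.Nonempty → (1/(k:ℝ)) * (Hn.card : ℝ) = 3*T := by
    intro h
    have hfull : Hn.card = 3*T*k := by
      rcases le_or_gt (3*T*k) Neg.card with hle|hlt
      · exact hHncard.trans (min_eq_left hle)
      · exfalso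
        have heq : Hn = Neg := Finset.eq_of_subset_of_card_le hHnNeg (by rw [hHncard]; omega)
        obtain ⟨y, hy⟩ := h
        exact (mem_sdiff.mp hy).2 (heq ▸ (mem_sdiff.mp hy).1)
    rw [hfull, one_div, inv_mul_eq_div, div_eq_iff hk0.ne']
    push_cast; ring
  have hlowHp : ∀ X ∈ ({A, B} : Set (Finset α)),
      Sp.Nonempty → 2*(T:ℝ) ≤ ((X ∩ Hp).card : ℝ) := by
    intro X hX hne
    have h := hb0 X hX
    rw [abs_le, hHpfull hne] at h
    linarith [h.2]
  have hlowHn : ∀ X ∈ ({A, B} : Set (Finset α)),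
      Sn.Nonempty → 2*(T:ℝ) ≤ ((X ∩ Hn).card : ℝ) := by
    intro X hX hne
    have h := hb1 X hX
    rw [abs_le, hHnfull hne] at h
    linarith [h.2]
  -- small items balance
  have habsSp : |(∑ x ∈ A ∩ Sp, v x) - (∑ x ∈ B ∩ Sp, v x)| ≤ 2*(T:ℝ)*mp := by
    have ha := hb2 A memA
    have hb := hb2 B memB
    rw [abs_le] at ha hb ⊢
    have hdiff : (∑ x ∈ A ∩ Sp, v x) - (∑ x ∈ B ∩ Sp, v x)
        = ((∑ x ∈ A ∩ Sp, v x) / mp - (∑ x ∈ B ∩ Sp, v x) / mp) * mp := by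
      rw [div_sub_div_same, div_mul_cancel₀ _ hmp_pos.ne']
    constructor
    · rw [hdiff]
      have h1 : -(2*(T:ℝ)) ≤ (∑ x ∈ A ∩ Sp, v x) / mp - (∑ x ∈ B ∩ Sp, v x) / mp := by
        linarith [ha.1, ha.2, hb.1, hb.2]
      have h2 := mul_le_mul_of_nonneg_right h1 hmp_pos.le
      linarith
    · rw [hdiff]
      have h1 : (∑ x ∈ A ∩ Sp, v x) / mp - (∑ x ∈ B ∩ Sp, v x) / mp ≤ 2*(T:ℝ) := by
        linarith [ha.1, ha.2, hb.1, hb.2]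
      have h2 := mul_le_mul_of_nonneg_right h1 hmp_pos.le
      linarith
  have habsSn : |(∑ x ∈ A ∩ Sn, v x) - (∑ x ∈ B ∩ Sn, v x)| ≤ 2*(T:ℝ)*mq := by
    have ha := hb3 A memA
    have hb := hb3 B memB
    rw [abs_le] at ha hb ⊢
    have hdiff : (∑ x ∈ A ∩ Sn, v x) - (∑ x ∈ B ∩ Sn, v x)
        = -(((-(∑ x ∈ A ∩ Sn, v x)) / mq - (-(∑ x ∈ B ∩ Sn, v x)) / mq) * mq) := by
      rw [div_sub_div_same, div_mul_cancel₀ _ hmq_pos.ne']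
      ring
    constructor
    · rw [hdiff]
      have h1 : (-(∑ x ∈ A ∩ Sn, v x)) / mq - (-(∑ x ∈ B ∩ Sn, v x)) / mq ≤ 2*(T:ℝ) := by
        linarith [ha.1, ha.2, hb.1, hb.2]
      have h2 := mul_le_mul_of_nonneg_right h1 hmq_pos.le
      linarith
    · rw [hdiff]
      have h1 : -(2*(T:ℝ)) ≤ (-(∑ x ∈ A ∩ Sn, v x)) / mq - (-(∑ x ∈ B ∩ Sn, v x)) / mq := by
        linarith [ha.1, ha.2, hb.1, hb.2]
      have h2 := mul_le_mul_of_nonneg_right h1 hmq_pos.le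
      linarith
  rw [abs_le] at habsSp habsSn
  constructor
  · exact key A B hA hB hd hupBHp hupAHn (hlowHp A memA) (hlowHn B memB)
      (fun _ => by linarith [habsSp.1]) (fun _ => by linarith [habsSn.1])
  · obtain ⟨P, h1, h2, h3⟩ := key B A hB hA hd.symm hupAHp hupBHn (hlowHp B memB)
      (hlowHn A memA) (fun _ => by linarith [habsSp.2]) (fun _ => by linarith [habsSn.2])
    exact ⟨P, by rwa [union_comm], h2, h3⟩
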